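/- For every Borel function F : A → ℝ^p with A ⊂ ℝ, the set of points x ∈ A at which liminf_{h→0} |F(x+h) − F(x)|/|h|^{1/p} = ∞ has Lebesgue measure zero. Consequently, for almost every x ∈ A there exist a sequence x_n → x, x_n ∈ A, x_n ≠ x, and a constant C < ∞ with |F(x_n) − F(x)| ≤ C|x_n − x|^{1/p}. -/

import Mathlib

open MeasureTheory Filter Set
open scoped ENNReal

namespace HolderAux

variable {p : ℕ} (A : Set ℝ) (F : ℝ → EuclideanSpace ℝ (Fin p))

lemma coord_le_norm (v : EuclideanSpace ℝ (Fin p)) (i : Fin p) : |v i| ≤ ‖v‖ := by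
  rw [EuclideanSpace.norm_eq]
  have h1 : |v i| = Real.sqrt (‖v i‖ ^ 2) := by
    rw [Real.sqrt_sq_eq_abs, Real.norm_eq_abs, abs_abs]
  rw [h1]
  exact Real.sqrt_le_sqrt (Finset.single_le_sum (f := fun j => ‖v j‖ ^ 2)
    (fun j _ => sq_nonneg _) (Finset.mem_univ i))

lemma norm_sub_le_of_coords (v w : EuclideanSpace ℝ (Fin p)) (s : ℝ) (hs : 0 ≤ s)
    (h : ∀ i, |v i - w i| ≤ s) : ‖v - w‖ ≤ s * Real.sqrt p := by
  rw [EuclideanSpace.norm_eq]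
  have hb : ∑ i, ‖(v - w) i‖ ^ 2 ≤ (p : ℝ) * s ^ 2 := by
    calc ∑ i, ‖(v - w) i‖ ^ 2 ≤ ∑ _i : Fin p, s ^ 2 := by
          refine Finset.sum_le_sum fun i _ => ?_
          rw [PiLp.sub_apply, Real.norm_eq_abs]
          exact pow_le_pow_left₀ (abs_nonneg _) (h i) 2
      _ = (p : ℝ) * s ^ 2 := by simp [Finset.sum_const, mul_comm]
  calc Real.sqrt (∑ i, ‖(v - w) i‖ ^ 2) ≤ Real.sqrt ((p:ℝ) * s ^ 2) := Real.sqrt_le_sqrt hb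
    _ = s * Real.sqrt p := by
        rw [Real.sqrt_mul (by positivity), Real.sqrt_sq hs]; ring

lemma card_Icc_sym (c : ℤ) (hc : 0 ≤ c) : ((Finset.Icc (-c) c).card : ℝ) = 2*(c:ℝ)+1 := by
  rw [Int.card_Icc]
  have h1 : (c + 1 - -c) = 2*c+1 := by ring
  rw [h1]
  have h2 : (((2*c+1).toNat : ℤ) : ℝ) = ((2*c+1 : ℤ) : ℝ) := by
    rw [Int.toNat_of_nonneg (by omega)]
  push_cast at h2 ⊢
  linarith

lemma rpow_bound {x C ρ : ℝ} {p : ℕ} (hp : p ≠ 0) (hx : 0 ≤ x) (hC : 0 < C)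
    (h : C * x ^ ((p:ℝ))⁻¹ ≤ ρ) : x ≤ ρ^p / C^p := by
  have h1 : x ^ ((p:ℝ))⁻¹ ≤ ρ / C := by
    rw [le_div_iff₀ hC]; linarith [mul_comm C (x ^ ((p:ℝ))⁻¹)]
  have h2 : (x ^ ((p:ℝ))⁻¹) ^ p ≤ (ρ / C) ^ p :=
    pow_le_pow_left₀ (Real.rpow_nonneg hx _) h1 p
  rwa [Real.rpow_inv_natCast_pow hx hp, div_pow] at h2

/-- The expansion property at center `x`. -/
def Pr (C δ x : ℝ) : Prop :=
  ∀ h : ℝ, x + h ∈ A → 0 < |h| → |h| < δ →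
    C * |h| ^ ((1 : ℝ) / p) < ‖F (x + h) - F x‖

/-- The bad set. -/
def Ebad : Set ℝ := {x ∈ A | ∀ C : ℝ, ∃ δ > 0, Pr A F C δ x}

def Spiece (m M : ℕ) (q : ℚ) : Set ℝ :=
  {x | x ∈ Ebad A F ∧ x ∈ Ioo (q:ℝ) ((q:ℝ) + 1/(2*((m:ℝ)+1))) ∧ ‖F x‖ ≤ (M:ℝ) ∧
    Pr A F 1 (1/((m:ℝ)+1)) x}

lemma cover : Ebad A F ⊆ ⋃ t : ℕ × ℕ × ℚ, Spiece A F t.1 t.2.1 t.2.2 := by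
  intro x hx
  obtain ⟨hxA, hx2⟩ := hx
  obtain ⟨δ₁, hδ₁, hP1⟩ := hx2 1
  obtain ⟨m, hm⟩ := exists_nat_one_div_lt hδ₁
  obtain ⟨M, hM⟩ := exists_nat_ge ‖F x‖
  have hhalf : (0:ℝ) < 1 / (2 * ((m:ℝ) + 1)) := by positivity
  obtain ⟨q, hq1, hq2⟩ := exists_rat_btwn (show x - 1/(2*((m:ℝ)+1)) < x by linarith)
  refine mem_iUnion.mpr ⟨(m, M, q), ⟨⟨hxA, hx2⟩, ⟨hq2, by linarith⟩, hM, ?_⟩⟩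
  exact fun h hA h0 hlt => hP1 h hA h0 (hlt.trans hm)

lemma Tbound (hp : 0 < p) (m M : ℕ) (q : ℚ) (C η : ℝ) (hC0 : 0 < C)
    (hη0 : 0 < η) (hη1 : η ≤ 1) :
    volume {x ∈ Spiece A F m M q | Pr A F C η x} ≤
      ENNReal.ofReal (2*(2*(M:ℝ)*p+3)^p/C^p) := by
  classical
  have hpne : p ≠ 0 := hp.ne'
  have hp1 : (1:ℝ) ≤ p := by exact_mod_cast hp
  set ρ : ℝ := η ^ ((p:ℝ))⁻¹ with hρdef
  have hρ0 : 0 < ρ := Real.rpow_pos_of_pos hη0 _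
  have hρ1 : ρ ≤ 1 := Real.rpow_le_one hη0.le hη1 (by positivity)
  have hρp : ρ ^ p = η := Real.rpow_inv_natCast_pow hη0.le hpne
  set s : ℝ := ρ / p with hsdef
  have hs0 : 0 < s := by rw [hsdef]; positivity
  set r : ℝ := η / C ^ p with hrdef
  have hr0 : 0 < r := by rw [hrdef]; positivity
  set δ : ℝ := 1 / ((m:ℝ) + 1) with hδdef
  have hδ0 : 0 < δ := by rw [hδdef]; positivity
  have hm1 : ((m:ℝ) + 1) ≠ 0 := by positivity
  have hwδ : 1 / (2 * ((m:ℝ) + 1)) = δ/2 := by rw [hδdef]; field_simp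
  set c : ℤ := ⌈(M:ℝ)/s⌉ with hcdef
  have hc0 : (0:ℤ) ≤ c := Int.ceil_nonneg (by positivity)
  set J : Finset (Fin p → ℤ) := Fintype.piFinset (fun _ => Finset.Icc (-c) c) with hJdef
  set g : ℝ → (Fin p → ℤ) := fun x i => ⌊F x i / s⌋ with hgdef
  set T : Set ℝ := {x ∈ Spiece A F m M q | Pr A F C η x} with hTdef
  have hsub : T ⊆ ⋃ z ∈ J, {x ∈ T | g x = z} := by
    intro x hx
    have hgJ : g x ∈ J := by
      rw [hJdef]
      refine Fintype.mem_piFinset.mpr fun i => ?_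
      have hxM : ‖F x‖ ≤ (M:ℝ) := hx.1.2.2.1
      have hco : |F x i| ≤ (M:ℝ) := le_trans (coord_le_norm (F x) i) hxM
      have hco1 : F x i ≤ (M:ℝ) := le_trans (le_abs_self _) hco
      have hco2 : -(M:ℝ) ≤ F x i := by
        have := neg_abs_le (F x i); linarith
      rw [Finset.mem_Icc]
      constructor
      · show -c ≤ ⌊F x i / s⌋
        rw [hcdef, ← Int.floor_neg]
        apply Int.floor_mono
        rw [← neg_div]
        exact div_le_div_of_nonneg_right hco2 hs0.le
      · show ⌊F x i / s⌋ ≤ c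
        calc ⌊F x i / s⌋ ≤ ⌊(M:ℝ)/s⌋ := Int.floor_mono (div_le_div_of_nonneg_right hco1 hs0.le)
          _ ≤ c := Int.floor_le_ceil _
    exact mem_biUnion hgJ ⟨hx, rfl⟩
  have hfiber : ∀ z, volume {x ∈ T | g x = z} ≤ ENNReal.ofReal (2 * r) := by
    intro z
    rcases eq_empty_or_nonempty {x ∈ T | g x = z} with he | ⟨x₀, hx₀⟩
    · simp [he]
    have hx₀T : x₀ ∈ T := hx₀.1
    have hkey : {x ∈ T | g x = z} ⊆ Icc (x₀ - r) (x₀ + r) := by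
      intro x hx
      have hd : |x - x₀| ≤ r := by
        rcases eq_or_ne x x₀ with he' | hne
        · rw [he']; simpa using hr0.le
        · have hxT : x ∈ T := hx.1
          have hcoords : ∀ i, |F x i - F x₀ i| ≤ s := by
            intro i
            have h1 : ⌊F x i / s⌋ = ⌊F x₀ i / s⌋ := by
              have e1 : g x = z := hx.2
              have e2 : g x₀ = z := hx₀.2
              have := congrFun (e1.trans e2.symm) i
              simpa [hgdef] using this
            have h2 : |F x i / s - F x₀ i / s| < 1 :=
              Int.abs_sub_lt_one_of_floor_eq_floor h1
            rw [div_sub_div_same, abs_div, abs_of_pos hs0, div_lt_one hs0] at h2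
            exact h2.le
          have hnorm : ‖F x - F x₀‖ ≤ ρ := by
            calc ‖F x - F x₀‖ ≤ s * Real.sqrt p :=
                  norm_sub_le_of_coords (F x) (F x₀) s hs0.le hcoords
              _ ≤ s * p := by
                  have hsq : Real.sqrt p ≤ (p:ℝ) :=
                    Real.sqrt_le_iff.mpr ⟨by positivity, by nlinarith⟩
                  exact mul_le_mul_of_nonneg_left hsq hs0.le
              _ = ρ := by rw [hsdef]; field_simp
          have hxI : x ∈ Ioo (q:ℝ) ((q:ℝ) + 1/(2*((m:ℝ)+1))) := hxT.1.2.1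
          have hx₀I : x₀ ∈ Ioo (q:ℝ) ((q:ℝ) + 1/(2*((m:ℝ)+1))) := hx₀T.1.2.1
          have hI : |x₀ - x| < δ := by
            rw [hwδ] at hxI hx₀I
            rw [abs_sub_lt_iff]
            obtain ⟨a1, a2⟩ := hxI
            obtain ⟨b1, b2⟩ := hx₀I
            constructor <;> linarith
          have h0' : 0 < |x₀ - x| := abs_pos.mpr (sub_ne_zero.mpr (Ne.symm hne))
          have hA₀ : x + (x₀ - x) ∈ A := by
            rw [show x + (x₀ - x) = x₀ by ring]
            exact hx₀T.1.1.1
          have hnorm' : ‖F x₀ - F x‖ ≤ ρ := by rwa [norm_sub_rev] at hnorm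
          have hP1 := hxT.1.2.2.2 (x₀ - x) hA₀ h0' hI
          rw [show x + (x₀ - x) = x₀ by ring, one_mul] at hP1
          have hlt_η : |x₀ - x| < η := by
            have ha1 : |x₀ - x| ^ ((1:ℝ)/p) < ρ := lt_of_lt_of_le hP1 hnorm'
            have ha2 : (|x₀ - x| ^ ((1:ℝ)/p)) ^ p < ρ ^ p :=
              pow_lt_pow_left₀ ha1 (Real.rpow_nonneg (abs_nonneg _) _) hpne
            rwa [one_div, Real.rpow_inv_natCast_pow (abs_nonneg _) hpne, hρp] at ha2
          have hPC := hxT.2 (x₀ - x) hA₀ h0' hlt_η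
          rw [show x + (x₀ - x) = x₀ by ring] at hPC
          have hfin : |x₀ - x| ≤ ρ ^ p / C ^ p := by
            apply rpow_bound hpne (abs_nonneg _) hC0
            rw [← one_div]
            exact le_trans hPC.le hnorm'
          rw [hρp] at hfin
          rw [abs_sub_comm]
          rw [hrdef]
          exact hfin
      have hd1 := (abs_sub_le_iff.mp hd).1
      have hd2 := (abs_sub_le_iff.mp hd).2
      exact ⟨by linarith, by linarith⟩
    calc volume {x ∈ T | g x = z} ≤ volume (Icc (x₀ - r) (x₀ + r)) := measure_mono hkey
      _ = ENNReal.ofReal (2 * r) := by rw [Real.volume_Icc]; ring_nf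
  calc volume T ≤ volume (⋃ z ∈ J, {x ∈ T | g x = z}) := measure_mono hsub
    _ ≤ ∑ z ∈ J, volume {x ∈ T | g x = z} := measure_biUnion_finset_le _ _
    _ ≤ ∑ _z ∈ J, ENNReal.ofReal (2*r) := Finset.sum_le_sum fun z _ => hfiber z
    _ = (J.card : ℝ≥0∞) * ENNReal.ofReal (2*r) := by
        rw [Finset.sum_const, nsmul_eq_mul]
    _ ≤ ENNReal.ofReal (2*(2*(M:ℝ)*p+3)^p/C^p) := by
        rw [← ENNReal.ofReal_natCast J.card, ← ENNReal.ofReal_mul (by positivity)]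
        apply ENNReal.ofReal_le_ofReal
        have hcard : (J.card : ℝ) ≤ (2*((M:ℝ)/s)+3)^p := by
          have h1 : J.card = ((Finset.Icc (-c) c).card)^p := by
            rw [hJdef, Fintype.card_piFinset]
            simp [Finset.prod_const, Finset.card_univ]
          rw [h1]
          push_cast
          apply pow_le_pow_left₀ (by positivity)
          rw [card_Icc_sym c hc0]
          have h3 : (c:ℝ) < (M:ℝ)/s + 1 := by
            rw [hcdef]; exact Int.ceil_lt_add_one _
          linarith
        have hρs : ρ / s = p := by
          rw [hsdef]; field_simp
        have hbase : (2*((M:ℝ)/s)+3) * ρ = 2*(M:ℝ)*(ρ/s) + 3*ρ := by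
          field_simp
        rw [hρs] at hbase
        calc (J.card:ℝ) * (2*r) ≤ (2*((M:ℝ)/s)+3)^p * (2*r) :=
              mul_le_mul_of_nonneg_right hcard (by positivity)
          _ = 2 * ((2*((M:ℝ)/s)+3)^p * η) / C^p := by rw [hrdef]; ring
          _ = 2 * ((2*((M:ℝ)/s)+3) * ρ)^p / C^p := by rw [← hρp, ← mul_pow]
          _ = 2 * (2*(M:ℝ)*p + 3*ρ)^p / C^p := by rw [hbase]
          _ ≤ 2 * (2*(M:ℝ)*p+3)^p / C^p := by
              have hnum : (2*(M:ℝ)*p + 3*ρ)^p ≤ (2*(M:ℝ)*p+3)^p := by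
                apply pow_le_pow_left₀ (by positivity)
                linarith
              exact div_le_div_of_nonneg_right (by linarith) (by positivity)
    

lemma Snull (hp : 0 < p) (m M : ℕ) (q : ℚ) : volume (Spiece A F m M q) = 0 := by
  have main : ∀ n : ℕ, volume (Spiece A F m M q) ≤
      ENNReal.ofReal (2*(2*(M:ℝ)*p+3)^p/((n:ℝ)+1)^p) := by
    intro n
    set T : ℕ → Set ℝ := fun k => {x ∈ Spiece A F m M q | Pr A F ((n:ℝ)+1) (1/((k:ℝ)+1)) x}
      with hTdef
    have hmono : Monotone T := by
      intro k k' hk x hx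
      refine ⟨hx.1, fun h hA h0 hlt => hx.2 h hA h0 (lt_of_lt_of_le hlt ?_)⟩
      apply one_div_le_one_div_of_le (by positivity)
      have : (k:ℝ) ≤ k' := by exact_mod_cast hk
      linarith
    have hunion : Spiece A F m M q = ⋃ k, T k := by
      apply Subset.antisymm
      · intro x hx
        obtain ⟨δ', hδ', hP⟩ := hx.1.2 ((n:ℝ)+1)
        obtain ⟨k, hk⟩ := exists_nat_one_div_lt hδ'
        exact mem_iUnion.mpr ⟨k, hx, fun h hA h0 hlt => hP h hA h0 (hlt.trans hk)⟩
      · exact iUnion_subset fun k x hx => hx.1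
    rw [hunion, hmono.measure_iUnion]
    refine iSup_le fun k => ?_
    have hk1 : (0:ℝ) < 1/((k:ℝ)+1) := by positivity
    have hk2 : (1:ℝ)/((k:ℝ)+1) ≤ 1 := by
      rw [div_le_one (by positivity)]
      linarith [Nat.cast_nonneg (α := ℝ) k]
    exact Tbound A F hp m M q ((n:ℝ)+1) (1/((k:ℝ)+1)) (by positivity) hk1 hk2
  have hlim : Tendsto (fun n : ℕ => ENNReal.ofReal (2*(2*(M:ℝ)*p+3)^p/((n:ℝ)+1)^p))
      atTop (nhds 0) := by
    rw [show (0:ℝ≥0∞) = ENNReal.ofReal 0 by simp]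
    apply ENNReal.tendsto_ofReal
    apply Tendsto.div_atTop tendsto_const_nhds
    exact (tendsto_pow_atTop hp.ne').comp
      (tendsto_atTop_add_const_right _ 1 tendsto_natCast_atTop_atTop)
  exact le_antisymm (ge_of_tendsto hlim (Eventually.of_forall main)) zero_le

lemma Enull (hp : 0 < p) : volume (Ebad A F) = 0 := by
  have h1 : volume (Ebad A F) ≤ ∑' t : ℕ × ℕ × ℚ, volume (Spiece A F t.1 t.2.1 t.2.2) :=
    le_trans (measure_mono (cover A F)) (measure_iUnion_le _)
  simpa [Snull A F hp] using h1

end HolderAux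

/-- (Elling 2012, case k = 1.) For every Borel function `F : A → ℝ^p` with `A ⊆ ℝ`, the set of
points `x ∈ A` at which `liminf_{h→0} ‖F(x+h) − F(x)‖ / |h|^{1/p} = ∞` is Lebesgue-null.
Consequently, for almost every `x ∈ A` there are a constant `C < ∞` and a sequence
`x_n → x`, `x_n ∈ A`, `x_n ≠ x`, with `‖F(x_n) − F(x)‖ ≤ C |x_n − x|^{1/p}`. -/
theorem holder_on_subsequence
    {p : ℕ} (hp : 0 < p) (A : Set ℝ)
    (F : ℝ → EuclideanSpace ℝ (Fin p))
    (hF : Measurable F) :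
    volume {x ∈ A | ∀ C : ℝ, ∃ δ > 0, ∀ h : ℝ, x + h ∈ A → 0 < |h| → |h| < δ →
        C * |h| ^ ((1 : ℝ) / p) < ‖F (x + h) - F x‖} = 0 ∧
    (∀ᵐ x ∂volume, x ∈ A →
      ∃ (C : ℝ) (u : ℕ → ℝ), Tendsto u atTop (nhds x) ∧
        ∀ n, u n ∈ A ∧ u n ≠ x ∧ ‖F (u n) - F x‖ ≤ C * |u n - x| ^ ((1 : ℝ) / p)) := by
  have key : volume {x ∈ A | ∀ C : ℝ, ∃ δ > 0, ∀ h : ℝ, x + h ∈ A → 0 < |h| → |h| < δ →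
      C * |h| ^ ((1 : ℝ) / p) < ‖F (x + h) - F x‖} = 0 := HolderAux.Enull A F hp
  refine ⟨key, ?_⟩
  have h0 := measure_eq_zero_iff_ae_notMem.mp key
  filter_upwards [h0] with x hx hxA
  have h2 : ¬ ∀ C : ℝ, ∃ δ > 0, ∀ h : ℝ, x + h ∈ A → 0 < |h| → |h| < δ →
      C * |h| ^ ((1 : ℝ) / p) < ‖F (x + h) - F x‖ := fun hc => hx ⟨hxA, hc⟩
  push_neg at h2
  obtain ⟨C, hC⟩ := h2
  have hseq : ∀ n : ℕ, ∃ h : ℝ, x + h ∈ A ∧ 0 < |h| ∧ |h| < 1/((n:ℝ)+1) ∧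
      ‖F (x + h) - F x‖ ≤ C * |h| ^ ((1:ℝ)/p) := fun n => hC (1/((n:ℝ)+1)) (by positivity)
  choose v hv1 hv2 hv3 hv4 using hseq
  refine ⟨C, fun n => x + v n, ?_, fun n => ⟨hv1 n, ?_, ?_⟩⟩
  · rw [tendsto_iff_dist_tendsto_zero]
    have hdist : ∀ n : ℕ, dist (x + v n) x = |v n| := fun n => by
      rw [Real.dist_eq, add_sub_cancel_left]
    apply squeeze_zero (fun n => dist_nonneg) (fun n => by rw [hdist n]; exact (hv3 n).le)
      tendsto_one_div_add_atTop_nhds_zero_nat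
  · intro he
    have h' : x + v n = x := he
    have hv0 : v n = 0 := by linarith
    have hcon := hv2 n
    rw [hv0] at hcon
    simp at hcon
  · show ‖F (x + v n) - F x‖ ≤ C * |x + v n - x| ^ ((1:ℝ)/p)
    rw [add_sub_cancel_left]
    exact hv4 n
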